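/- Let S be an N×N real symmetric matrix with spectral decomposition S = U Λ Uᵀ, where U is orthogonal and Λ = Diag(λ₁,…,λ_N) contains the eigenvalues of S, and let ρ > 0. Define V = Diag(v₁,…,v_N) with vᵢ = (−ρλᵢ + √(ρ²λᵢ² + 4ρ))/(2ρ), and G* = U V Uᵀ. Then G* is symmetric positive definite, and for every N×N real symmetric positive definite matrix G, −ln det(G*) + ρ·tr(S G*) + (ρ/2)‖G*‖_F² ≤ −ln det(G) + ρ·tr(S G) + (ρ/2)‖G‖_F². -/

import Mathlib

open Matrix

lemma aux_trace {n : Type*} [Fintype n] [DecidableEq n] {A : Matrix n n ℝ}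
    (hA : A.IsHermitian) : A.trace = ∑ i, hA.eigenvalues i := by
  conv_lhs => rw [hA.spectral_theorem, Unitary.conjStarAlgAut_apply]
  rw [Matrix.trace_mul_cycle, Unitary.coe_star_mul_self, Matrix.one_mul]
  simp [Matrix.trace_diagonal]

lemma log_det_le {n : Type*} [Fintype n] [DecidableEq n] {C : Matrix n n ℝ}
    (hC : C.PosDef) : Real.log C.det ≤ C.trace - (Fintype.card n : ℝ) := by
  rw [hC.isHermitian.det_eq_prod_eigenvalues, aux_trace hC.isHermitian]
  simp only [RCLike.ofReal_real_eq_id, id_eq]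
  rw [Real.log_prod (fun i _ => (hC.eigenvalues_pos i).ne')]
  have h := fun i (_ : i ∈ Finset.univ) => Real.log_le_sub_one_of_pos (hC.eigenvalues_pos i)
  calc ∑ i, Real.log (hC.1.eigenvalues i) ≤ ∑ i, (hC.1.eigenvalues i - 1) := Finset.sum_le_sum h
    _ = ∑ i, hC.1.eigenvalues i - Fintype.card n := by
        rw [Finset.sum_sub_distrib]; simp [Finset.card_univ]

lemma posDef_conj {n : Type*} [Fintype n] [DecidableEq n] {A B : Matrix n n ℝ}
    (hA : A.PosDef) (hB : IsUnit B) : (Bᵀ * A * B).PosDef := by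
  refine Matrix.PosDef.of_dotProduct_mulVec_pos ?_ (fun x hx => ?_)
  · have := Matrix.isHermitian_conjTranspose_mul_mul B hA.1
    rwa [Matrix.conjTranspose_eq_transpose_of_trivial] at this
  · have hBx : B *ᵥ x ≠ 0 := by
      intro h
      apply hx
      have := Matrix.mulVec_injective_iff_isUnit.mpr hB (a₁ := x) (a₂ := 0)
      simpa [h] using this
    have h2 := hA.dotProduct_mulVec_pos hBx
    rw [← Matrix.conjTranspose_eq_transpose_of_trivial]
    simpa only [star_mulVec, dotProduct_mulVec, vecMul_vecMul] using h2

open scoped MatrixOrder in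
lemma log_det_sub_le {n : Type*} [Fintype n] [DecidableEq n] {A B : Matrix n n ℝ}
    (hA : A.PosDef) (hB : B.PosDef) :
    Real.log A.det - Real.log B.det ≤ (B⁻¹ * A).trace - (Fintype.card n : ℝ) := by
  have hBi : (B⁻¹).PosDef := hB.inv
  set Q := CFC.sqrt (B⁻¹) with hQdef
  have hQps : Q.PosSemidef := (CFC.sqrt_nonneg (B⁻¹)).posSemidef
  have hQQ : Q * Q = B⁻¹ := CFC.sqrt_mul_sqrt_self (B⁻¹) hBi.posSemidef.nonneg
  have hdetBi : 0 < (B⁻¹).det := hBi.det_pos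
  have hQdet : Q.det ≠ 0 := by
    intro h
    rw [← hQQ, det_mul, h, mul_zero] at hdetBi; exact lt_irrefl _ hdetBi
  have hQunit : IsUnit Q := (Matrix.isUnit_iff_isUnit_det _).mpr hQdet.isUnit
  have hQsymm : Qᵀ = Q := by
    rw [← Matrix.conjTranspose_eq_transpose_of_trivial]; exact hQps.1
  have hC : (Q * A * Q).PosDef := by
    have := posDef_conj hA hQunit
    rwa [hQsymm] at this
  have h := log_det_le hC
  have hdet : (Q * A * Q).det = A.det / B.det := by
    rw [det_mul, det_mul,
      show Q.det * A.det * Q.det = A.det * (Q * Q).det by rw [det_mul]; ring,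
      hQQ, det_nonsing_inv, Ring.inverse_eq_inv', div_eq_mul_inv]
  have htr : (Q * A * Q).trace = (B⁻¹ * A).trace := by
    rw [Matrix.trace_mul_cycle, hQQ]
  rw [hdet, htr, Real.log_div hA.det_pos.ne' hB.det_pos.ne'] at h
  exact h

theorem stmt9 {N : ℕ} (S U : Matrix (Fin N) (Fin N) ℝ) (lam : Fin N → ℝ)
    (hSsym : S.IsSymm) (hU : Uᵀ * U = 1)
    (hS : S = U * Matrix.diagonal lam * Uᵀ)
    (ρ : ℝ) (hρ : 0 < ρ) :
    let Gstar : Matrix (Fin N) (Fin N) ℝ :=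
      U * Matrix.diagonal
        (fun i => (-(ρ * lam i) + Real.sqrt (ρ ^ 2 * lam i ^ 2 + 4 * ρ)) / (2 * ρ)) * Uᵀ
    Gstar.PosDef ∧
      ∀ G : Matrix (Fin N) (Fin N) ℝ, G.PosDef →
        -Real.log Gstar.det + ρ * (S * Gstar).trace + ρ / 2 * (∑ i, ∑ j, (Gstar i j) ^ 2)
          ≤ -Real.log G.det + ρ * (S * G).trace + ρ / 2 * (∑ i, ∑ j, (G i j) ^ 2) := by
  intro Gstar
  set v : Fin N → ℝ :=
    fun i => (-(ρ * lam i) + Real.sqrt (ρ ^ 2 * lam i ^ 2 + 4 * ρ)) / (2 * ρ) with hvdef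
  have hGdef : Gstar = U * Matrix.diagonal v * Uᵀ := rfl
  have hUUT : U * Uᵀ = 1 := mul_eq_one_comm.mp hU
  have hUdet : Uᵀ.det ≠ 0 := by
    intro h
    have h1 := congrArg Matrix.det hU
    rw [Matrix.det_mul, h, zero_mul, Matrix.det_one] at h1
    exact zero_ne_one h1
  have hUunit : IsUnit Uᵀ := (Matrix.isUnit_iff_isUnit_det _).mpr hUdet.isUnit
  -- positivity of v
  have hnn : ∀ i, (0:ℝ) ≤ ρ ^ 2 * lam i ^ 2 + 4 * ρ := by
    intro i; nlinarith [sq_nonneg (ρ * lam i), sq_nonneg (lam i)]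
  have hv : ∀ i, 0 < v i := by
    intro i
    have habs : |ρ * lam i| < Real.sqrt (ρ ^ 2 * lam i ^ 2 + 4 * ρ) := by
      rw [← Real.sqrt_sq_eq_abs]
      apply Real.sqrt_lt_sqrt (sq_nonneg _)
      nlinarith [sq_nonneg (lam i)]
    apply div_pos _ (by linarith)
    have := le_abs_self (ρ * lam i)
    linarith
  have hvmul : ∀ i, v i * (ρ * lam i + ρ * v i) = 1 := by
    intro i
    have hs : Real.sqrt (ρ ^ 2 * lam i ^ 2 + 4 * ρ) ^ 2 = ρ ^ 2 * lam i ^ 2 + 4 * ρ :=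
      Real.sq_sqrt (hnn i)
    rw [hvdef]
    field_simp
    rw [show ρ * (ρ * lam i ^ 2 + 4) = ρ ^ 2 * lam i ^ 2 + 4 * ρ by ring]
    nlinarith [hs]
  -- diagonal identity
  have hdiag : Matrix.diagonal v * (ρ • Matrix.diagonal lam + ρ • Matrix.diagonal v) = 1 := by
    rw [← Matrix.diagonal_smul, ← Matrix.diagonal_smul, Matrix.diagonal_add,
      Matrix.diagonal_mul_diagonal, ← Matrix.diagonal_one]
    exact congrArg Matrix.diagonal (funext fun i => by simpa [smul_eq_mul] using hvmul i)
  -- conjugation helpers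
  have hconj : ∀ X Y : Matrix (Fin N) (Fin N) ℝ,
      (U * X * Uᵀ) * (U * Y * Uᵀ) = U * (X * Y) * Uᵀ := by
    intro X Y
    simp only [Matrix.mul_assoc]
    rw [show Uᵀ * (U * (Y * Uᵀ)) = Y * Uᵀ by rw [← Matrix.mul_assoc, hU, Matrix.one_mul]]
  have hsmul : ∀ (c : ℝ) (X : Matrix (Fin N) (Fin N) ℝ),
      c • (U * X * Uᵀ) = U * (c • X) * Uᵀ := by
    intro c X; simp [smul_mul_assoc, mul_smul_comm]
  have hadd : ∀ X Y : Matrix (Fin N) (Fin N) ℝ,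
      U * X * Uᵀ + U * Y * Uᵀ = U * (X + Y) * Uᵀ := by
    intro X Y; simp [Matrix.mul_add, Matrix.add_mul]
  -- positive definiteness
  have hGstar : Gstar.PosDef := by
    rw [hGdef]
    have := posDef_conj (Matrix.PosDef.diagonal hv) hUunit
    rwa [Matrix.transpose_transpose] at this
  refine ⟨hGstar, fun G hG => ?_⟩
  have hdet0 : Gstar.det ≠ 0 := hGstar.det_pos.ne'
  -- inverse formula
  have hkey : Gstar * (ρ • S + ρ • Gstar) = 1 := by
    rw [hGdef, hS, hsmul, hsmul, hadd, hconj, hdiag, Matrix.mul_one, hUUT]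
  have hinv : Gstar⁻¹ = ρ • S + ρ • Gstar := Matrix.inv_eq_right_inv hkey
  -- trace identities
  have htrG : (Gstar⁻¹ * G).trace = ρ * (S * G).trace + ρ * (Gstar * G).trace := by
    rw [hinv, Matrix.add_mul, smul_mul_assoc, smul_mul_assoc]
    simp [smul_eq_mul]
  have hNeq : (N : ℝ) = ρ * (S * Gstar).trace + ρ * (Gstar * Gstar).trace := by
    have h1 : Gstar⁻¹ * Gstar = 1 := Matrix.nonsing_inv_mul _ hdet0.isUnit
    have h2 := congrArg Matrix.trace h1
    rw [hinv, Matrix.add_mul, smul_mul_assoc, smul_mul_assoc] at h2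
    simp only [Matrix.trace_add, Matrix.trace_smul, smul_eq_mul, Matrix.trace_one,
      Fintype.card_fin] at h2
    linarith
  -- trace to sums
  have htr2 : ∀ A B : Matrix (Fin N) (Fin N) ℝ, (A * B).trace = ∑ i, ∑ j, A i j * B j i := by
    intro A B; simp [Matrix.trace, Matrix.diag, Matrix.mul_apply]
  have hGsymm : ∀ i j, G j i = G i j := by
    intro i j
    have := congrFun (congrFun hG.1 i) j
    simpa using this
  have hGssymm : ∀ i j, Gstar j i = Gstar i j := by
    intro i j
    have := congrFun (congrFun hGstar.1 i) j
    simpa using this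
  have htrGG : (Gstar * G).trace = ∑ i, ∑ j, Gstar i j * G i j := by
    rw [htr2]
    exact Finset.sum_congr rfl fun i _ => Finset.sum_congr rfl fun j _ => by rw [hGsymm]
  have htrGsGs : (Gstar * Gstar).trace = ∑ i, ∑ j, (Gstar i j) ^ 2 := by
    rw [htr2]
    exact Finset.sum_congr rfl fun i _ => Finset.sum_congr rfl fun j _ => by
      rw [hGssymm]; ring
  -- main log-det inequality
  have hlog := log_det_sub_le hG hGstar
  rw [htrG, Fintype.card_fin] at hlog
  -- square expansion
  have hexp : ∑ i, ∑ j, (G i j - Gstar i j) ^ 2 =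
      (∑ i, ∑ j, (G i j) ^ 2) - 2 * (∑ i, ∑ j, Gstar i j * G i j)
        + ∑ i, ∑ j, (Gstar i j) ^ 2 := by
    have h : ∀ i j, (G i j - Gstar i j) ^ 2 =
        (G i j) ^ 2 - 2 * (Gstar i j * G i j) + (Gstar i j) ^ 2 := fun i j => by ring
    simp only [h, Finset.sum_add_distrib, Finset.sum_sub_distrib, ← Finset.mul_sum]
  have hsq : 0 ≤ ∑ i, ∑ j, (G i j - Gstar i j) ^ 2 :=
    Finset.sum_nonneg fun i _ => Finset.sum_nonneg fun j _ => sq_nonneg _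
  rw [hexp] at hsq
  have hprod : 0 ≤ ρ * ((∑ i, ∑ j, (G i j) ^ 2) - 2 * (∑ i, ∑ j, Gstar i j * G i j)
      + ∑ i, ∑ j, (Gstar i j) ^ 2) := mul_nonneg hρ.le hsq
  rw [htrGG] at hlog
  rw [htrGsGs] at hNeq
  linarith [hlog, hNeq, hprod]
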